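/- Let (𝒟,K) and (𝒞,J) be small sites and p : 𝒟 ⥤ 𝒞 a comorphism of sites which is continuous and a local fibration; let ρ_p : Sheaf J ⥤ Sheaf K be the restriction functor F ↦ F ∘ p.op and L : Sheaf K ⥤ Sheaf J a left adjoint of ρ_p. Then L is a fibration in the Street sense: for every object F of Sheaf K and every morphism φ : E ⟶ L(F) in Sheaf J, there exist a cartesian morphism (for L) f̂ : F' ⟶ F in Sheaf K and an isomorphism σ : L(F') ≅ E with L(f̂) = φ ∘ σ. -/

import Mathlib

open CategoryTheory Limits

universe u

/-- A morphism `f : d' ⟶ d` is cartesian for a functor `p : 𝒟 ⥤ 𝒞`. -/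
def IsCartesianFor {D : Type*} [Category D] {C : Type*} [Category C] (p : D ⥤ C)
    {d' d : D} (f : d' ⟶ d) : Prop :=
  ∀ {d'' : D} (g : d'' ⟶ d) (h : p.obj d'' ⟶ p.obj d'),
    h ≫ p.map f = p.map g → ∃! h' : d'' ⟶ d', p.map h' = h ∧ h' ≫ f = g

/-- A functor `p : 𝒟 ⥤ 𝒞` is a fibration in the Street sense. -/
def IsStreetFibration {D : Type*} [Category D] {C : Type*} [Category C] (p : D ⥤ C) : Prop :=
  ∀ (d : D) (c : C) (f : c ⟶ p.obj d),
    ∃ (d' : D) (fhat : d' ⟶ d) (σ : p.obj d' ≅ c),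
      IsCartesianFor p fhat ∧ p.map fhat = σ.hom ≫ f

/-- A morphism `f : d' ⟶ d` is `K`-locally cartesian for `p : 𝒟 ⥤ 𝒞`. -/
def LocallyCartesian {D : Type*} [Category D] {C : Type*} [Category C]
    (K : GrothendieckTopology D) (p : D ⥤ C) {d' d : D} (f : d' ⟶ d) : Prop :=
  (∀ (d'' : D) (g : d'' ⟶ d) (h : p.obj d'' ⟶ p.obj d'),
      h ≫ p.map f = p.map g →
      ∃ S : Sieve d'', S ∈ K d'' ∧
        ∀ {e : D} (v : e ⟶ d''), S.arrows v →
          ∃ hv : e ⟶ d', p.map v ≫ h = p.map hv ∧ hv ≫ f = v ≫ g) ∧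
  (∀ (d'' : D) (h h' : d'' ⟶ d'), h ≫ f = h' ≫ f → p.map h = p.map h' →
      ∃ S : Sieve d'', S ∈ K d'' ∧ ∀ {e : D} (v : e ⟶ d''), S.arrows v → v ≫ h = v ≫ h')

/-- A functor `p : (𝒟, K) ⥤ (𝒞, J)` is a comorphism of sites. -/
def IsComorphismOfSites {D : Type*} [Category D] {C : Type*} [Category C] (p : D ⥤ C)
    (K : GrothendieckTopology D) (J : GrothendieckTopology C) : Prop :=
  ∀ (d : D) (S : Sieve (p.obj d)), S ∈ J (p.obj d) → S.functorPullback p ∈ K d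

/-- A comorphism of sites `p : (𝒟,K) ⟶ (𝒞,J)` is a local fibration if every morphism
`f : c ⟶ p(d)` can be locally factored through `K`-locally cartesian morphisms along a
`J`-covering family. -/
def IsLocalFibration {D : Type*} [Category D] {C : Type*} [Category C] (p : D ⥤ C)
    (K : GrothendieckTopology D) (J : GrothendieckTopology C) : Prop :=
  IsComorphismOfSites p K J ∧
    ∀ (d : D) (c : C) (f : c ⟶ p.obj d),
      ∃ (ι : Type u) (di : ι → D) (fi : ∀ i, p.obj (di i) ⟶ c) (fhat : ∀ i, di i ⟶ d),
        Sieve.generate (Presieve.ofArrows (fun i => p.obj (di i)) fi) ∈ J c ∧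
          ∀ i, LocallyCartesian K p (fhat i) ∧ fi i ≫ f = p.map (fhat i)

variable {D C : Type u} [SmallCategory D] [SmallCategory C]

/-- The restriction functor `ρ_p : Sheaf J ⥤ Sheaf K`, `F ↦ F ∘ p.op`, defined when `p` is
continuous. -/
def restrictSheaf (p : D ⥤ C) (K : GrothendieckTopology D) (J : GrothendieckTopology C)
    (hcont : ∀ F : Sheaf J (Type u), Presheaf.IsSheaf K (p.op ⋙ F.val)) :
    Sheaf J (Type u) ⥤ Sheaf K (Type u) where
  obj F := ⟨p.op ⋙ F.val, hcont F⟩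
  map φ := ⟨Functor.whiskerLeft p.op φ.hom⟩
  map_id := by intros; apply ObjectProperty.hom_ext; rfl
  map_comp := by intros; apply ObjectProperty.hom_ext; rfl

namespace StreetAux

open Opposite

/-- Bundle of all the data of the theorem. -/
structure Setup (D C : Type u) [SmallCategory D] [SmallCategory C] where
  p : D ⥤ C
  K : GrothendieckTopology D
  J : GrothendieckTopology C
  hp : IsLocalFibration.{u} p K J
  hcont : ∀ F : Sheaf J (Type u), Presheaf.IsSheaf K (p.op ⋙ F.val)
  L : Sheaf K (Type u) ⥤ Sheaf J (Type u)
  adj : L ⊣ restrictSheaf p K J hcont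

/-- the restriction functor -/
abbrev Setup.ρ (S : Setup D C) : Sheaf S.J (Type u) ⥤ Sheaf S.K (Type u) :=
  restrictSheaf S.p S.K S.J S.hcont

/-- Continuity implies that images of covering sieves generate covering sieves. -/
theorem Setup.push_mem (S : Setup D C) (d : D) {T : Sieve d} (hT : T ∈ S.K d) :
    Sieve.functorPushforward S.p T ∈ S.J (S.p.obj d) := by
  let Ω : Sheaf S.J (Type u) :=
    ⟨(Functor.closedSieves S.J).toFunctor,
      (isSheaf_iff_isSheaf_of_type S.J _).mpr (classifier_isSheaf S.J)⟩
  have hsep := ((isSheaf_iff_isSheaf_of_type S.K _).mp (S.hcont Ω) T hT).isSeparatedFor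
  have key : (⟨S.J.close (Sieve.functorPushforward S.p T),
      S.J.close_isClosed _⟩ : (S.p.op ⋙ Ω.val).obj (op d))
      = ⟨(⊤ : Sieve (S.p.obj d)), fun _ _ _ => trivial⟩ := by
    apply hsep.ext
    intro d'' g hg
    apply Subtype.ext
    show (S.J.close (Sieve.functorPushforward S.p T)).pullback (S.p.map g)
        = (⊤ : Sieve (S.p.obj d)).pullback (S.p.map g)
    rw [Sieve.pullback_top, ← Sieve.id_mem_iff_eq_top]
    show S.J.Covers (Sieve.functorPushforward S.p T) (𝟙 _ ≫ S.p.map g)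
    rw [Category.id_comp, S.J.covers_iff]
    have : (Sieve.functorPushforward S.p T).pullback (S.p.map g) = ⊤ := by
      rw [← Sieve.id_mem_iff_eq_top]
      show Sieve.functorPushforward S.p T (𝟙 _ ≫ S.p.map g)
      exact ⟨d'', g, 𝟙 _, hg, by simp⟩
    rw [this]
    exact S.J.top_mem _
  have := congrArg Subtype.val key
  rw [← S.J.close_eq_top_iff_mem]
  exact this

/-- The sieve of morphisms along which `A` becomes a restriction of a unit element. -/
def Setup.unitSieve (S : Setup D C) (X : Sheaf S.K (Type u)) {c : C}
    (A : (S.L.obj X).val.obj (op c)) : Sieve c where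
  arrows := fun c₀ m => ∃ (d : D) (t : c₀ ⟶ S.p.obj d) (ξ : X.val.obj (op d)),
    (S.L.obj X).val.map m.op A
      = (S.L.obj X).val.map t.op ((S.adj.unit.app X).hom.app (op d) ξ)
  downward_closed := by
    rintro c₀ c₁ m ⟨d, t, ξ, h⟩ g
    exact ⟨d, g ≫ t, ξ, by
      erw [op_comp, FunctorToTypes.map_comp_apply, h, op_comp, FunctorToTypes.map_comp_apply]⟩

/-- Every element of `L X` is locally a restriction of a unit element. -/
theorem Setup.unitSieve_mem (S : Setup D C) (X : Sheaf S.K (Type u)) {c : C}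
    (A : (S.L.obj X).val.obj (op c)) : S.unitSieve X A ∈ S.J c := by
  classical
  let G₀ : Subfunctor (S.L.obj X).val :=
    { obj := fun U => { B | ∃ (d : D) (t : unop U ⟶ S.p.obj d) (ξ : X.val.obj (op d)),
        B = (S.L.obj X).val.map t.op ((S.adj.unit.app X).hom.app (op d) ξ) }
      map := by
        rintro U V i B ⟨d, t, ξ, h⟩
        exact ⟨d, i.unop ≫ t, ξ, by
          erw [h, op_comp, ← FunctorToTypes.map_comp_apply]
          rfl⟩ }
  have hLX : Presieve.IsSheaf S.J (S.L.obj X).val :=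
    (isSheaf_iff_isSheaf_of_type S.J _).mp (S.L.obj X).cond
  have hT : Presheaf.IsSheaf S.J (G₀.sheafify S.J).toFunctor :=
    (isSheaf_iff_isSheaf_of_type S.J _).mpr (G₀.sheafify_isSheaf hLX)
  let Ts : Sheaf S.J (Type u) := ⟨(G₀.sheafify S.J).toFunctor, hT⟩
  let ι : Ts ⟶ S.L.obj X := ⟨(G₀.sheafify S.J).ι⟩
  let w : X ⟶ S.ρ.obj Ts :=
    ⟨{ app := fun U => ↾fun ξ => ⟨(S.adj.unit.app X).hom.app U ξ,
        (G₀.le_sheafify S.J) _ ⟨unop U, 𝟙 _, ξ, by simp; rfl⟩⟩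
       naturality := by
        intro U V i
        apply ConcreteCategory.hom_ext; intro ξ
        apply Subtype.ext
        exact FunctorToTypes.naturality (S.adj.unit.app X).hom i ξ }⟩
  have hcomp : (S.adj.homEquiv X Ts).symm w ≫ ι = 𝟙 (S.L.obj X) := by
    apply (S.adj.homEquiv X (S.L.obj X)).injective
    rw [Adjunction.homEquiv_naturality_right, Equiv.apply_symm_apply, Adjunction.homEquiv_id]
    apply Sheaf.hom_ext
    apply NatTrans.ext
    funext U
    apply ConcreteCategory.hom_ext; intro ξ
    rfl
  have hmem : A ∈ (G₀.sheafify S.J).obj (op c) := by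
    have h1 := ConcreteCategory.congr_hom (NatTrans.congr_app (congrArg InducedCategory.Hom.hom hcomp) (op c)) A
    have h2 : (((S.adj.homEquiv X Ts).symm w).hom.app (op c) A).1 = A := h1
    rw [← h2]
    exact (((S.adj.homEquiv X Ts).symm w).hom.app (op c) A).2
  exact S.J.superset_covering (fun c₀ m hm => hm) hmem


/-- Elementwise naturality of the unit. -/
theorem Setup.unit_elem (S : Setup D C) (X : Sheaf S.K (Type u)) {d d' : D} (w : d' ⟶ d)
    (ξ : X.val.obj (op d)) :
    (S.adj.unit.app X).hom.app (op d') (X.val.map w.op ξ)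
      = (S.L.obj X).val.map (S.p.map w).op ((S.adj.unit.app X).hom.app (op d) ξ) :=
  FunctorToTypes.naturality (S.adj.unit.app X).hom w.op ξ

/-- Elementwise description of the transpose of a morphism into a restricted sheaf. -/
theorem Setup.transpose_unit_elem (S : Setup D C) {Xs : Sheaf S.K (Type u)}
    {G : Sheaf S.J (Type u)} (β : Xs ⟶ S.ρ.obj G) {d : D} (ξ : Xs.val.obj (op d)) :
    ((S.adj.homEquiv Xs G).symm β).hom.app (op (S.p.obj d))
        ((S.adj.unit.app Xs).hom.app (op d) ξ)
      = β.hom.app (op d) ξ := by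
  have h : S.adj.unit.app Xs ≫ S.ρ.map ((S.adj.homEquiv Xs G).symm β) = β := by
    have h0 := Equiv.apply_symm_apply (S.adj.homEquiv Xs G) β
    rw [Adjunction.homEquiv_unit] at h0
    exact h0
  exact ConcreteCategory.congr_hom (NatTrans.congr_app (congrArg InducedCategory.Hom.hom h) (op d)) ξ

/-- Elementwise naturality for morphisms of `J`-sheaves. -/
theorem elem_nat {J' : GrothendieckTopology C} {G G' : Sheaf J' (Type u)} (ψ : G ⟶ G')
    {c c' : C} (m : c' ⟶ c) (z : G.val.obj (op c)) :
    ψ.hom.app (op c') (G.val.map m.op z) = G'.val.map m.op (ψ.hom.app (op c) z) :=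
  FunctorToTypes.naturality ψ.hom m.op z

/-- Bundle including the sheaves `F`, `E` and the morphism `φ : E ⟶ L F`. -/
structure SetupF (D C : Type u) [SmallCategory D] [SmallCategory C] extends Setup D C where
  Fs : Sheaf K (Type u)
  E : Sheaf J (Type u)
  ph : E ⟶ L.obj Fs

/-- The underlying presheaf of the pullback sheaf `F' = F ×_{ρLF} ρE`. -/
@[simps]
def SetupF.FpVal (S : SetupF D C) : Dᵒᵖ ⥤ Type u where
  obj X := { s : S.Fs.val.obj X × S.E.val.obj (S.p.op.obj X) //
    (S.adj.unit.app S.Fs).hom.app X s.1 = S.ph.hom.app (S.p.op.obj X) s.2 }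
  map {X Y} i := ↾fun s => ⟨⟨S.Fs.val.map i s.1.1, S.E.val.map (S.p.op.map i) s.1.2⟩, by
    have h1 := FunctorToTypes.naturality (S.adj.unit.app S.Fs).hom i s.1.1
    have h2 := FunctorToTypes.naturality S.ph.hom (S.p.op.map i) s.1.2
    exact h1.trans ((congrArg ((S.p.op ⋙ (S.L.obj S.Fs).val).map i) s.2).trans h2.symm)⟩
  map_id X := by
    apply ConcreteCategory.hom_ext; intro s
    apply Subtype.ext
    apply Prod.ext <;> simp
  map_comp {X Y Z} i j := by
    apply ConcreteCategory.hom_ext; intro s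
    apply Subtype.ext
    apply Prod.ext <;> simp

theorem SetupF.FpVal_isSheaf (S : SetupF D C) : Presheaf.IsSheaf S.K S.FpVal := by
  rw [isSheaf_iff_isSheaf_of_type]
  intro d T hT x hx
  let xF : Presieve.FamilyOfElements S.Fs.val T.arrows := fun d'' g hg => (x g hg).1.1
  let xE : Presieve.FamilyOfElements (S.p.op ⋙ S.E.val) T.arrows := fun d'' g hg => (x g hg).1.2
  have hxF : xF.Compatible := by
    intro Y₁ Y₂ Z g₁ g₂ f₁ f₂ h₁ h₂ comm
    exact congrArg (fun s => s.1.1) (hx g₁ g₂ h₁ h₂ comm)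
  have hxE : xE.Compatible := by
    intro Y₁ Y₂ Z g₁ g₂ f₁ f₂ h₁ h₂ comm
    exact congrArg (fun s => s.1.2) (hx g₁ g₂ h₁ h₂ comm)
  have hF := (isSheaf_iff_isSheaf_of_type S.K _).mp S.Fs.cond T hT
  have hE := (isSheaf_iff_isSheaf_of_type S.K _).mp (S.hcont S.E) T hT
  have hLFsep := ((isSheaf_iff_isSheaf_of_type S.K _).mp
    (S.hcont (S.L.obj S.Fs)) T hT).isSeparatedFor
  let t1 := hF.amalgamate xF hxF
  let t2 := hE.amalgamate xE hxE
  have hcond : (S.adj.unit.app S.Fs).hom.app (op d) t1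
      = S.ph.hom.app (S.p.op.obj (op d)) t2 := by
    apply hLFsep.ext
    intro Y g hg
    have e1 := (FunctorToTypes.naturality (S.adj.unit.app S.Fs).hom g.op t1).symm
    have e3 := congrArg ((S.adj.unit.app S.Fs).hom.app (op Y)) (hF.valid_glue hxF g hg)
    have e4 := (x g hg).2
    have e5 := congrArg (S.ph.hom.app (S.p.op.obj (op Y))) (hE.valid_glue hxE g hg)
    have e2 := FunctorToTypes.naturality S.ph.hom (S.p.op.map g.op) t2
    exact e1.trans (e3.trans (e4.trans (e5.symm.trans e2)))
  refine ⟨⟨⟨t1, t2⟩, hcond⟩, ?_, ?_⟩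
  · intro Y g hg
    apply Subtype.ext
    apply Prod.ext
    · exact hF.valid_glue hxF g hg
    · exact hE.valid_glue hxE g hg
  · intro y hy
    apply Subtype.ext
    apply Prod.ext
    · exact hF.isSeparatedFor xF y.1.1 t1
        (fun Y g hg => congrArg (fun s => s.1.1) (hy g hg)) (hF.isAmalgamation hxF)
    · exact hE.isSeparatedFor xE y.1.2 t2
        (fun Y g hg => congrArg (fun s => s.1.2) (hy g hg)) (hE.isAmalgamation hxE)

/-- The pullback sheaf `F'`. -/
def SetupF.Fp (S : SetupF D C) : Sheaf S.K (Type u) := ⟨S.FpVal, S.FpVal_isSheaf⟩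

/-- First projection `F' ⟶ F`. -/
def SetupF.fh (S : SetupF D C) : S.Fp ⟶ S.Fs :=
  ⟨{ app := fun X => ↾fun s => s.1.1, naturality := fun X Y i => rfl }⟩

/-- Second projection `F' ⟶ ρ E`. -/
def SetupF.sndH (S : SetupF D C) : S.Fp ⟶ S.ρ.obj S.E :=
  ⟨{ app := fun X => ↾fun s => s.1.2, naturality := fun X Y i => rfl }⟩

/-- The transpose `L F' ⟶ E` of the second projection. -/
noncomputable def SetupF.gsh (S : SetupF D C) : S.L.obj S.Fp ⟶ S.E :=
  (S.adj.homEquiv S.Fp S.E).symm S.sndH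

theorem SetupF.gsh_unit (S : SetupF D C) {d : D} (s : S.FpVal.obj (op d)) :
    S.gsh.hom.app (op (S.p.obj d)) ((S.adj.unit.app S.Fp).hom.app (op d) s) = s.1.2 :=
  S.transpose_unit_elem S.sndH s

theorem SetupF.fh_unit_eq (S : SetupF D C) :
    S.fh ≫ S.adj.unit.app S.Fs = S.sndH ≫ S.ρ.map S.ph := by
  apply Sheaf.hom_ext
  apply NatTrans.ext
  funext X
  apply ConcreteCategory.hom_ext; intro s
  exact s.2

theorem SetupF.Lfh_eq (S : SetupF D C) : S.L.map S.fh = S.gsh ≫ S.ph := by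
  apply (S.adj.homEquiv S.Fp (S.L.obj S.Fs)).injective
  have h1 : S.adj.homEquiv S.Fp (S.L.obj S.Fs) (S.L.map S.fh)
      = S.fh ≫ S.adj.unit.app S.Fs := by
    rw [Adjunction.homEquiv_unit]
    exact (S.adj.unit.naturality S.fh).symm
  have h2 : S.adj.homEquiv S.Fp (S.L.obj S.Fs) (S.gsh ≫ S.ph)
      = S.sndH ≫ S.ρ.map S.ph := by
    rw [Adjunction.homEquiv_naturality_right]
    congr 1
    exact Equiv.apply_symm_apply _ _
  rw [h1, h2, S.fh_unit_eq]


/-- The sieve along which `y₀` lifts through `gsh`. -/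
def SetupF.surjSieve (S : SetupF D C) {c : C} (y₀ : S.E.val.obj (op c)) : Sieve c where
  arrows := fun c₀ m => ∃ z : (S.L.obj S.Fp).val.obj (op c₀),
    S.gsh.hom.app (op c₀) z = S.E.val.map m.op y₀
  downward_closed := by
    rintro c₀ c₁ m ⟨z, hz⟩ g
    refine ⟨(S.L.obj S.Fp).val.map g.op z, ?_⟩
    rw [elem_nat S.gsh g z, hz, op_comp, FunctorToTypes.map_comp_apply]

theorem SetupF.surjSieve_mem (S : SetupF D C) {c : C} (y₀ : S.E.val.obj (op c)) :
    S.surjSieve y₀ ∈ S.J c := by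
  apply S.J.transitive (S.unitSieve_mem S.Fs (S.ph.hom.app (op c) y₀))
  rintro c₀ m ⟨d, t, ξ, hrep⟩
  obtain ⟨I, a, f, that, hcov, hlc⟩ := S.hp.2 d c₀ t
  apply S.J.superset_covering ?_ hcov
  rintro c₁ g ⟨Z, h, g', ⟨i⟩, hcomp⟩
  -- the canonical element of `F'` over `a i`
  have hcond : (S.adj.unit.app S.Fs).hom.app (op (a i)) (S.Fs.val.map (that i).op ξ)
      = S.ph.hom.app (op (S.p.obj (a i))) (S.E.val.map (f i ≫ m).op y₀) := by
    have e1 := S.unit_elem S.Fs (that i) ξ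
    have e2 : (S.L.obj S.Fs).val.map (S.p.map (that i)).op
          ((S.adj.unit.app S.Fs).hom.app (op d) ξ)
        = (S.L.obj S.Fs).val.map (f i).op ((S.L.obj S.Fs).val.map t.op
          ((S.adj.unit.app S.Fs).hom.app (op d) ξ)) := by
      erw [← FunctorToTypes.map_comp_apply, ← op_comp, (hlc i).2]
    have e3 := congrArg ((S.L.obj S.Fs).val.map (f i).op) hrep.symm
    have e4 : (S.L.obj S.Fs).val.map (f i).op ((S.L.obj S.Fs).val.map m.op
          (S.ph.hom.app (op c) y₀))
        = (S.L.obj S.Fs).val.map (f i ≫ m).op (S.ph.hom.app (op c) y₀) := by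
      rw [op_comp, FunctorToTypes.map_comp_apply]
    have e5 := FunctorToTypes.naturality S.ph.hom (f i ≫ m).op y₀
    exact e1.trans (e2.trans (e3.trans (e4.trans e5.symm)))
  refine ⟨(S.L.obj S.Fp).val.map h.op
    ((S.adj.unit.app S.Fp).hom.app (op (a i))
      ⟨⟨S.Fs.val.map (that i).op ξ, S.E.val.map (f i ≫ m).op y₀⟩, hcond⟩), ?_⟩
  erw [elem_nat S.gsh h, S.gsh_unit]
  show S.E.val.map h.op (S.E.val.map (f i ≫ m).op y₀) = S.E.val.map (g ≫ m).op y₀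
  rw [← FunctorToTypes.map_comp_apply, ← op_comp, ← Category.assoc, hcomp]

/-- Data of a local factorization of `u : c' ⟶ p d` through locally cartesian morphisms. -/
structure LiftData (S : Setup D C) (d : D) (c' : C) (u : c' ⟶ S.p.obj d) where
  I : Type u
  a : I → D
  f : ∀ i, S.p.obj (a i) ⟶ c'
  that : ∀ i, a i ⟶ d
  cov : Sieve.generate (Presieve.ofArrows (fun i => S.p.obj (a i)) f) ∈ S.J c'
  lc : ∀ i, LocallyCartesian S.K S.p (that i)
  fac : ∀ i, f i ≫ u = S.p.map (that i)

/-- A choice of such data, from the local fibration hypothesis. -/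
noncomputable def Setup.liftData (S : Setup D C) (d : D) (c' : C) (u : c' ⟶ S.p.obj d) :
    LiftData S d c' u :=
  ⟨(S.hp.2 d c' u).choose, (S.hp.2 d c' u).choose_spec.choose,
   (S.hp.2 d c' u).choose_spec.choose_spec.choose,
   (S.hp.2 d c' u).choose_spec.choose_spec.choose_spec.choose,
   (S.hp.2 d c' u).choose_spec.choose_spec.choose_spec.choose_spec.1,
   fun i => ((S.hp.2 d c' u).choose_spec.choose_spec.choose_spec.choose_spec.2 i).1,
   fun i => ((S.hp.2 d c' u).choose_spec.choose_spec.choose_spec.choose_spec.2 i).2⟩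

section ML

variable (S : SetupF D C) {G : Sheaf S.J (Type u)} (β : S.Fp ⟶ S.ρ.obj G)

/-- The master comparison lemma: values of `β` on two restrictions of the same pair `(x, y')`
agree, provided one of the two structure maps is locally cartesian. -/
theorem SetupF.ML {d : D} (x : S.Fs.val.obj (op d)) {c' : C} (y' : S.E.val.obj (op c'))
    {a₁ a₂ : D} (r₁ : a₁ ⟶ d) (r₂ : a₂ ⟶ d) (hr₂ : LocallyCartesian S.K S.p r₂)
    (q₁ : S.p.obj a₁ ⟶ c') (q₂ : S.p.obj a₂ ⟶ c')
    (hc₁ : (S.adj.unit.app S.Fs).hom.app (op a₁) (S.Fs.val.map r₁.op x)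
      = S.ph.hom.app (op (S.p.obj a₁)) (S.E.val.map q₁.op y'))
    (hc₂ : (S.adj.unit.app S.Fs).hom.app (op a₂) (S.Fs.val.map r₂.op x)
      = S.ph.hom.app (op (S.p.obj a₂)) (S.E.val.map q₂.op y'))
    {c₀ : C} (g₁ : c₀ ⟶ S.p.obj a₁) (g₂ : c₀ ⟶ S.p.obj a₂)
    (hpp : g₁ ≫ S.p.map r₁ = g₂ ≫ S.p.map r₂) (hq : g₁ ≫ q₁ = g₂ ≫ q₂) :
    G.val.map g₁.op (β.hom.app (op a₁) ⟨⟨S.Fs.val.map r₁.op x, S.E.val.map q₁.op y'⟩, hc₁⟩)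
      = G.val.map g₂.op (β.hom.app (op a₂) ⟨⟨S.Fs.val.map r₂.op x, S.E.val.map q₂.op y'⟩, hc₂⟩) := by
  classical
  obtain ⟨I, b, f', ghat, hcov, hprops⟩ := S.hp.2 a₁ c₀ g₁
  set σ₁ : S.FpVal.obj (op a₁) := ⟨⟨S.Fs.val.map r₁.op x, S.E.val.map q₁.op y'⟩, hc₁⟩ with hσ₁
  set σ₂ : S.FpVal.obj (op a₂) := ⟨⟨S.Fs.val.map r₂.op x, S.E.val.map q₂.op y'⟩, hc₂⟩ with hσ₂
  set t₁ := G.val.map g₁.op (β.hom.app (op a₁) σ₁) with ht₁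
  set t₂ := G.val.map g₂.op (β.hom.app (op a₂) σ₂) with ht₂
  let Z : Sieve c₀ :=
    { arrows := fun c₁ w => G.val.map w.op t₁ = G.val.map w.op t₂
      downward_closed := by
        intro c₁ c₂ w hw g
        rw [op_comp, FunctorToTypes.map_comp_apply, hw, FunctorToTypes.map_comp_apply] }
  have hZ : Z ∈ S.J c₀ := by
    apply S.J.transitive hcov
    rintro c₁ g ⟨Zc, h, g', ⟨m⟩, hgfac⟩
    -- apply property (i) of r₂
    have hcomm : (f' m ≫ g₂) ≫ S.p.map r₂ = S.p.map (ghat m ≫ r₁) := by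
      rw [S.p.map_comp, Category.assoc, ← hpp, ← Category.assoc, (hprops m).2]
    obtain ⟨Sm, hSm, hlift⟩ := (hr₂).1 (b m) (ghat m ≫ r₁) (f' m ≫ g₂) hcomm
    have hpush := S.push_mem (b m) hSm
    apply S.J.superset_covering ?_ (S.J.pullback_stable h hpush)
    rintro c₂ n hn
    obtain ⟨r, v, τ', hv, hfac2⟩ := hn
    obtain ⟨μ, hμ1, hμ2⟩ := hlift v hv
    have hw1 : (v ≫ ghat m) ≫ r₁ = μ ≫ r₂ := by rw [Category.assoc, ← hμ2]
    have hw2 : S.p.map (v ≫ ghat m) ≫ q₁ = S.p.map μ ≫ q₂ := by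
      rw [← hμ1, S.p.map_comp, ← (hprops m).2]
      simp only [Category.assoc]
      rw [hq]
    have key : S.FpVal.map (v ≫ ghat m).op σ₁ = S.FpVal.map μ.op σ₂ := by
      apply Subtype.ext
      apply Prod.ext
      · show S.Fs.val.map (v ≫ ghat m).op (S.Fs.val.map r₁.op x)
          = S.Fs.val.map μ.op (S.Fs.val.map r₂.op x)
        rw [← FunctorToTypes.map_comp_apply, ← FunctorToTypes.map_comp_apply,
          ← op_comp, ← op_comp, hw1]
      · show S.E.val.map (S.p.map (v ≫ ghat m)).op (S.E.val.map q₁.op y')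
          = S.E.val.map (S.p.map μ).op (S.E.val.map q₂.op y')
        rw [← FunctorToTypes.map_comp_apply, ← FunctorToTypes.map_comp_apply,
          ← op_comp, ← op_comp, hw2]
    show G.val.map (n ≫ g).op t₁ = G.val.map (n ≫ g).op t₂
    erw [ht₁, ht₂, ← FunctorToTypes.map_comp_apply, ← FunctorToTypes.map_comp_apply,
      ← op_comp, ← op_comp]
    have hp1 : (n ≫ g) ≫ g₁ = τ' ≫ S.p.map (v ≫ ghat m) := by
      rw [← hgfac, S.p.map_comp]
      simp only [Category.assoc]
      rw [(hprops m).2, ← Category.assoc n h, hfac2]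
      simp only [Category.assoc]
    have hp2 : (n ≫ g) ≫ g₂ = τ' ≫ S.p.map μ := by
      rw [← hgfac]
      simp only [Category.assoc]
      rw [← Category.assoc n h, hfac2]
      simp only [Category.assoc]
      rw [hμ1]
    erw [hp1, hp2, op_comp, op_comp, FunctorToTypes.map_comp_apply,
      FunctorToTypes.map_comp_apply]
    have b1 := FunctorToTypes.naturality β.hom (v ≫ ghat m).op σ₁
    have b2 := FunctorToTypes.naturality β.hom μ.op σ₂
    exact congrArg (G.val.map τ'.op)
      (b1.symm.trans ((congrArg (β.hom.app (op r)) key).trans b2))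
  exact (((isSheaf_iff_isSheaf_of_type S.J _).mp G.cond Z hZ).isSeparatedFor).ext
    (fun c₁ w hw => hw)


end ML

theorem SetupF.sig_cond (S : SetupF D C) {d : D} (x : S.Fs.val.obj (op d)) {c' : C}
    (u : c' ⟶ S.p.obj d) (y' : S.E.val.obj (op c'))
    (hy : S.ph.hom.app (op c') y'
      = (S.L.obj S.Fs).val.map u.op ((S.adj.unit.app S.Fs).hom.app (op d) x))
    {a : D} (that : a ⟶ d) (f : S.p.obj a ⟶ c') (hfac : f ≫ u = S.p.map that) :
    (S.adj.unit.app S.Fs).hom.app (op a) (S.Fs.val.map that.op x)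
      = S.ph.hom.app (op (S.p.obj a)) (S.E.val.map f.op y') := by
  have e1 := S.unit_elem S.Fs that x
  have e2 : (S.L.obj S.Fs).val.map (S.p.map that).op ((S.adj.unit.app S.Fs).hom.app (op d) x)
      = (S.L.obj S.Fs).val.map f.op ((S.L.obj S.Fs).val.map u.op
        ((S.adj.unit.app S.Fs).hom.app (op d) x)) := by
    erw [← FunctorToTypes.map_comp_apply, ← op_comp, hfac]
  have e3 := congrArg ((S.L.obj S.Fs).val.map f.op) hy.symm
  have e4 := FunctorToTypes.naturality S.ph.hom f.op y'
  exact e1.trans (e2.trans (e3.trans e4.symm))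

/-- The canonical elements of `F'` over the pieces of a local factorization of `u`. -/
noncomputable def SetupF.sigma (S : SetupF D C) {d : D} (x : S.Fs.val.obj (op d)) {c' : C}
    (u : c' ⟶ S.p.obj d) (y' : S.E.val.obj (op c'))
    (hy : S.ph.hom.app (op c') y'
      = (S.L.obj S.Fs).val.map u.op ((S.adj.unit.app S.Fs).hom.app (op d) x))
    (i : (S.liftData d c' u).I) : S.FpVal.obj (op ((S.liftData d c' u).a i)) :=
  ⟨⟨S.Fs.val.map ((S.liftData d c' u).that i).op x,
    S.E.val.map ((S.liftData d c' u).f i).op y'⟩,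
   S.sig_cond x u y' hy _ _ ((S.liftData d c' u).fac i)⟩

section Glue

variable (S : SetupF D C) {G : Sheaf S.J (Type u)} (β : S.Fp ⟶ S.ρ.obj G)

theorem SetupF.glue_exists {d : D} (x : S.Fs.val.obj (op d)) {c' : C}
    (u : c' ⟶ S.p.obj d) (y' : S.E.val.obj (op c'))
    (hy : S.ph.hom.app (op c') y'
      = (S.L.obj S.Fs).val.map u.op ((S.adj.unit.app S.Fs).hom.app (op d) x)) :
    ∃! t : G.val.obj (op c'), ∀ i,
      G.val.map ((S.liftData d c' u).f i).op t
        = β.hom.app (op ((S.liftData d c' u).a i)) (S.sigma x u y' hy i) := by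
  have hGFor : Presieve.IsSheafFor G.val
      (Presieve.ofArrows (fun i => S.p.obj ((S.liftData d c' u).a i)) (S.liftData d c' u).f) :=
    (Presieve.isSheafFor_iff_generate _).mpr
      (((isSheaf_iff_isSheaf_of_type S.J _).mp G.cond) _ (S.liftData d c' u).cov)
  apply (Presieve.isSheafFor_arrows_iff _ _).mp hGFor
  intro i j Zc gi gj comm
  exact S.ML β x y' ((S.liftData d c' u).that i) ((S.liftData d c' u).that j)
    ((S.liftData d c' u).lc j) ((S.liftData d c' u).f i) ((S.liftData d c' u).f j)
    (S.sig_cond x u y' hy _ _ ((S.liftData d c' u).fac i))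
    (S.sig_cond x u y' hy _ _ ((S.liftData d c' u).fac j)) gi gj
    (by rw [← (S.liftData d c' u).fac i, ← (S.liftData d c' u).fac j,
      ← Category.assoc, ← Category.assoc, comm]) comm

/-- The glued section of `G` over `c'`, the value of the pairing of `x` with `y'`. -/
noncomputable def SetupF.glue {d : D} (x : S.Fs.val.obj (op d)) {c' : C}
    (u : c' ⟶ S.p.obj d) (y' : S.E.val.obj (op c'))
    (hy : S.ph.hom.app (op c') y'
      = (S.L.obj S.Fs).val.map u.op ((S.adj.unit.app S.Fs).hom.app (op d) x)) :
    G.val.obj (op c') :=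
  (S.glue_exists β x u y' hy).exists.choose

theorem SetupF.glue_spec {d : D} (x : S.Fs.val.obj (op d)) {c' : C}
    (u : c' ⟶ S.p.obj d) (y' : S.E.val.obj (op c')) (hy : _) (i : (S.liftData d c' u).I) :
    G.val.map ((S.liftData d c' u).f i).op (S.glue β x u y' hy)
      = β.hom.app (op ((S.liftData d c' u).a i)) (S.sigma x u y' hy i) :=
  (S.glue_exists β x u y' hy).exists.choose_spec i

theorem SetupF.glue_uniq {d : D} (x : S.Fs.val.obj (op d)) {c' : C}
    (u : c' ⟶ S.p.obj d) (y' : S.E.val.obj (op c')) (hy : _) (t : G.val.obj (op c'))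
    (ht : ∀ i, G.val.map ((S.liftData d c' u).f i).op t
      = β.hom.app (op ((S.liftData d c' u).a i)) (S.sigma x u y' hy i)) :
    t = S.glue β x u y' hy :=
  (S.glue_exists β x u y' hy).unique ht ((S.glue_exists β x u y' hy).exists.choose_spec)

theorem SetupF.glue_congr {d : D} {x₁ x₂ : S.Fs.val.obj (op d)} {c' : C}
    {u₁ u₂ : c' ⟶ S.p.obj d} {y₁ y₂ : S.E.val.obj (op c')} (hx : x₁ = x₂) (hu : u₁ = u₂)
    (hy' : y₁ = y₂) (h₁ : _) (h₂ : _) :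
    S.glue β x₁ u₁ y₁ h₁ = S.glue β x₂ u₂ y₂ h₂ := by
  subst hx; subst hu; subst hy'; rfl


/-- The master compatibility of glued sections: gluing commutes with restriction and with
moving the `F`-variable along a morphism of `D`. -/
theorem SetupF.glue_comp {d₁ d₂ : D} (w : d₁ ⟶ d₂) (x : S.Fs.val.obj (op d₂))
    {c'₁ c'₂ : C} (ω : c'₁ ⟶ c'₂) (u₁ : c'₁ ⟶ S.p.obj d₁) (u₂ : c'₂ ⟶ S.p.obj d₂)
    (coh : u₁ ≫ S.p.map w = ω ≫ u₂) (y₂ : S.E.val.obj (op c'₂))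
    (hy₂ : S.ph.hom.app (op c'₂) y₂
      = (S.L.obj S.Fs).val.map u₂.op ((S.adj.unit.app S.Fs).hom.app (op d₂) x))
    (hy₁ : S.ph.hom.app (op c'₁) (S.E.val.map ω.op y₂)
      = (S.L.obj S.Fs).val.map u₁.op
          ((S.adj.unit.app S.Fs).hom.app (op d₁) (S.Fs.val.map w.op x))) :
    S.glue β (S.Fs.val.map w.op x) u₁ (S.E.val.map ω.op y₂) hy₁
      = G.val.map ω.op (S.glue β x u₂ y₂ hy₂) := by
  set ld₁ := S.liftData d₁ c'₁ u₁ with hld₁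
  set ld₂ := S.liftData d₂ c'₂ u₂ with hld₂
  set t₁ := S.glue β (S.Fs.val.map w.op x) u₁ (S.E.val.map ω.op y₂) hy₁ with ht₁
  set t₂ := G.val.map ω.op (S.glue β x u₂ y₂ hy₂) with ht₂
  let Z : Sieve c'₁ :=
    { arrows := fun c₁ v => G.val.map v.op t₁ = G.val.map v.op t₂
      downward_closed := by
        intro c₁ c₂ v hv g
        rw [op_comp, FunctorToTypes.map_comp_apply, hv, FunctorToTypes.map_comp_apply] }
  have hZ : Z ∈ S.J c'₁ := by
    apply S.J.transitive ld₁.cov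
    rintro c₁ g ⟨Zc, h, g', ⟨i⟩, hgfac⟩
    apply S.J.superset_covering ?_ (S.J.pullback_stable (g ≫ ω) ld₂.cov)
    rintro c₂ n hn
    obtain ⟨Zc2, τ2, g2', ⟨j⟩, hfac2⟩ := hn
    have hA : n ≫ g = (n ≫ h) ≫ ld₁.f i := by rw [← hgfac, Category.assoc]
    have hB : (n ≫ g) ≫ ω = τ2 ≫ ld₂.f j := by rw [Category.assoc]; exact hfac2.symm
    have hC : (n ≫ h) ≫ (ld₁.f i) ≫ ω = τ2 ≫ ld₂.f j := by
      rw [← Category.assoc, ← hA, hB]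
    have hcomp1 : S.Fs.val.map (ld₁.that i).op (S.Fs.val.map w.op x)
        = S.Fs.val.map ((ld₁.that i) ≫ w).op x := by
      rw [← FunctorToTypes.map_comp_apply, ← op_comp]
    have hcomp2 : S.E.val.map (ld₁.f i).op (S.E.val.map ω.op y₂)
        = S.E.val.map ((ld₁.f i) ≫ ω).op y₂ := by
      rw [← FunctorToTypes.map_comp_apply, ← op_comp]
    have he₁ : (S.adj.unit.app S.Fs).hom.app (op (ld₁.a i))
          (S.Fs.val.map ((ld₁.that i) ≫ w).op x)
        = S.ph.hom.app (op (S.p.obj (ld₁.a i)))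
          (S.E.val.map ((ld₁.f i) ≫ ω).op y₂) := by
      rw [← hcomp1, ← hcomp2]
      exact (S.sigma (S.Fs.val.map w.op x) u₁ (S.E.val.map ω.op y₂) hy₁ i).2
    have hσe : S.sigma (S.Fs.val.map w.op x) u₁ (S.E.val.map ω.op y₂) hy₁ i
        = (⟨⟨S.Fs.val.map ((ld₁.that i) ≫ w).op x,
            S.E.val.map ((ld₁.f i) ≫ ω).op y₂⟩, he₁⟩ : S.FpVal.obj (op (ld₁.a i))) := by
      apply Subtype.ext
      apply Prod.ext
      · exact hcomp1
      · exact hcomp2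
    have hpp : (n ≫ h) ≫ S.p.map ((ld₁.that i) ≫ w) = τ2 ≫ S.p.map (ld₂.that j) := by
      rw [S.p.map_comp, ← ld₁.fac i]
      simp only [Category.assoc]
      rw [coh, ← ld₂.fac j, ← Category.assoc τ2, ← hC]
      simp only [Category.assoc]
    have eL : G.val.map (n ≫ g).op t₁ = G.val.map (n ≫ h).op
        (β.hom.app (op (ld₁.a i)) (S.sigma (S.Fs.val.map w.op x) u₁
          (S.E.val.map ω.op y₂) hy₁ i)) := by
      rw [ht₁, hA, op_comp, FunctorToTypes.map_comp_apply, S.glue_spec]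
    have eR : G.val.map (n ≫ g).op t₂ = G.val.map τ2.op
        (β.hom.app (op (ld₂.a j)) (S.sigma x u₂ y₂ hy₂ j)) := by
      rw [ht₂, ← FunctorToTypes.map_comp_apply, ← op_comp, hB, op_comp,
        FunctorToTypes.map_comp_apply, S.glue_spec]
    show G.val.map (n ≫ g).op t₁ = G.val.map (n ≫ g).op t₂
    rw [eL, eR, hσe]
    exact S.ML β x y₂ ((ld₁.that i) ≫ w) (ld₂.that j) (ld₂.lc j) ((ld₁.f i) ≫ ω)
      (ld₂.f j) he₁ (S.sig_cond x u₂ y₂ hy₂ _ _ (ld₂.fac j)) (n ≫ h) τ2 hpp hC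
  exact (((isSheaf_iff_isSheaf_of_type S.J _).mp G.cond Z hZ).isSeparatedFor).ext
    (fun c₁ v hv => hv)

/-- Gluing the pair coming from an element of `F'` gives back the value of `β`. -/
theorem SetupF.glue_eval {d : D} (s : S.FpVal.obj (op d)) {c : C} (v : c ⟶ S.p.obj d)
    (hy : S.ph.hom.app (op c) (S.E.val.map v.op s.1.2)
      = (S.L.obj S.Fs).val.map v.op ((S.adj.unit.app S.Fs).hom.app (op d) s.1.1)) :
    S.glue β s.1.1 v (S.E.val.map v.op s.1.2) hy = G.val.map v.op (β.hom.app (op d) s) := by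
  refine (S.glue_uniq β s.1.1 v (S.E.val.map v.op s.1.2) hy
    (G.val.map v.op (β.hom.app (op d) s)) ?_).symm
  intro i
  have e1 : G.val.map ((S.liftData d c v).f i).op (G.val.map v.op (β.hom.app (op d) s))
      = G.val.map (S.p.map ((S.liftData d c v).that i)).op (β.hom.app (op d) s) := by
    erw [← FunctorToTypes.map_comp_apply, ← op_comp, (S.liftData d c v).fac i]
  have e2 := FunctorToTypes.naturality β.hom ((S.liftData d c v).that i).op s
  have e3 : S.FpVal.map ((S.liftData d c v).that i).op s
      = S.sigma s.1.1 v (S.E.val.map v.op s.1.2) hy i := by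
    apply Subtype.ext
    apply Prod.ext
    · rfl
    · show S.E.val.map (S.p.map ((S.liftData d c v).that i)).op s.1.2
        = S.E.val.map ((S.liftData d c v).f i).op (S.E.val.map v.op s.1.2)
      rw [← FunctorToTypes.map_comp_apply, ← op_comp, (S.liftData d c v).fac i]
  exact e1.trans (e2.symm.trans (congrArg (β.hom.app (op ((S.liftData d c v).a i))) e3))


end Glue

/-- An element of the auxiliary presheaf `G'` over `c`: an element `z` of `L F` together with a
compatible family of "pairings" with elements of `E` lying over `z`. -/
structure GP (S : SetupF D C) (G : Sheaf S.J (Type u)) (c : C) where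
  z : (S.L.obj S.Fs).val.obj (op c)
  γ : ∀ {c' : C} (u : c' ⟶ c) (y' : S.E.val.obj (op c')),
    S.ph.hom.app (op c') y' = (S.L.obj S.Fs).val.map u.op z → G.val.obj (op c')
  nat : ∀ {c' c'' : C} (w : c'' ⟶ c') (u : c' ⟶ c) (y' : S.E.val.obj (op c'))
    (h : S.ph.hom.app (op c') y' = (S.L.obj S.Fs).val.map u.op z)
    (h₂ : S.ph.hom.app (op c'') (S.E.val.map w.op y')
      = (S.L.obj S.Fs).val.map (w ≫ u).op z),
    γ (w ≫ u) (S.E.val.map w.op y') h₂ = G.val.map w.op (γ u y' h)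

namespace GP

variable {S : SetupF D C} {G : Sheaf S.J (Type u)}

theorem ext' {c : C} {A B : GP S G c} (hz : A.z = B.z)
    (hγ : ∀ {c' : C} (u : c' ⟶ c) (y' : S.E.val.obj (op c'))
      (hA : S.ph.hom.app (op c') y' = (S.L.obj S.Fs).val.map u.op A.z)
      (hB : S.ph.hom.app (op c') y' = (S.L.obj S.Fs).val.map u.op B.z),
      A.γ u y' hA = B.γ u y' hB) : A = B := by
  obtain ⟨zA, γA, natA⟩ := A
  obtain ⟨zB, γB, natB⟩ := B
  dsimp at hz
  subst hz
  have hg : @γA = @γB := by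
    funext c' u y' h
    exact hγ u y' h h
  subst hg
  rfl

theorem gcongr {c : C} {A B : GP S G c} (e : A = B) {c' : C} (u : c' ⟶ c)
    (y' : S.E.val.obj (op c'))
    (hA : S.ph.hom.app (op c') y' = (S.L.obj S.Fs).val.map u.op A.z)
    (hB : S.ph.hom.app (op c') y' = (S.L.obj S.Fs).val.map u.op B.z) :
    A.γ u y' hA = B.γ u y' hB := by subst e; rfl

theorem acongr {c : C} (A : GP S G c) {c' : C} {u₁ u₂ : c' ⟶ c} (hu : u₁ = u₂)
    {y₁ y₂ : S.E.val.obj (op c')} (hy : y₁ = y₂)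
    (h₁ : S.ph.hom.app (op c') y₁ = (S.L.obj S.Fs).val.map u₁.op A.z)
    (h₂ : S.ph.hom.app (op c') y₂ = (S.L.obj S.Fs).val.map u₂.op A.z) :
    A.γ u₁ y₁ h₁ = A.γ u₂ y₂ h₂ := by subst hu; subst hy; rfl

end GP

/-- The auxiliary presheaf `G'`. -/
def GPval (S : SetupF D C) (G : Sheaf S.J (Type u)) : Cᵒᵖ ⥤ Type u where
  obj X := GP S G (unop X)
  map {X Y} i := ↾fun A =>
    { z := (S.L.obj S.Fs).val.map i A.z
      γ := fun {c'} u y' h => A.γ (u ≫ i.unop) y' (by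
        rw [h, ← FunctorToTypes.map_comp_apply]
        rfl)
      nat := by
        intro c' c'' w u y' h h₂
        have hmid : S.ph.hom.app (op c'') (S.E.val.map w.op y')
            = (S.L.obj S.Fs).val.map (w ≫ u ≫ i.unop).op A.z := by
          rw [h₂, ← FunctorToTypes.map_comp_apply]
          congr 1
          simp only [op_comp, Quiver.Hom.op_unop, Category.assoc]
        have hu' : S.ph.hom.app (op c') y'
            = (S.L.obj S.Fs).val.map (u ≫ i.unop).op A.z := by
          rw [h, ← FunctorToTypes.map_comp_apply]
          rfl
        exact (GP.acongr A (Category.assoc w u i.unop) rfl _ hmid).trans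
          (A.nat w (u ≫ i.unop) y' hu' hmid) }
  map_id X := by
    apply ConcreteCategory.hom_ext; intro A
    apply GP.ext'
    · exact FunctorToTypes.map_id_apply _ _
    · intro c' u y' hA hB
      exact GP.acongr A (Category.comp_id u) rfl _ _
  map_comp {X Y Z} i j := by
    apply ConcreteCategory.hom_ext; intro A
    apply GP.ext'
    · exact FunctorToTypes.map_comp_apply _ _ _ _
    · intro c' u y' hA hB
      exact GP.acongr A (Category.assoc u j.unop i.unop).symm rfl _ _

theorem GPval_isSheaf (S : SetupF D C) (G : Sheaf S.J (Type u)) :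
    Presheaf.IsSheaf S.J (GPval S G) := by
  rw [isSheaf_iff_isSheaf_of_type]
  intro c T hT fam hfam
  have hLF := (isSheaf_iff_isSheaf_of_type S.J _).mp (S.L.obj S.Fs).cond T hT
  have hGsh : ∀ {c' : C} (W : Sieve c'), W ∈ S.J c' → Presieve.IsSheafFor G.val W.arrows :=
    fun W hW => (isSheaf_iff_isSheaf_of_type S.J _).mp G.cond W hW
  have famcongr : ∀ {c₀ : C} {f₁ f₂ : c₀ ⟶ c} (_ : f₁ = f₂) (h₁ : T.arrows f₁)
      (h₂ : T.arrows f₂), fam f₁ h₁ = fam f₂ h₂ := by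
    intro c₀ f₁ f₂ e h₁ h₂; subst e; rfl
  let zf : Presieve.FamilyOfElements (S.L.obj S.Fs).val T.arrows := fun c₀ g hg => (fam g hg).z
  have hzf : zf.Compatible := by
    intro Y₁ Y₂ Z g₁ g₂ f₁ f₂ h₁ h₂ comm
    exact congrArg GP.z (hfam g₁ g₂ h₁ h₂ comm)
  set z0 := hLF.amalgamate zf hzf with hz0
  have hcond : ∀ {c' : C} (u : c' ⟶ c) (y' : S.E.val.obj (op c'))
      (_ : S.ph.hom.app (op c') y' = (S.L.obj S.Fs).val.map u.op z0)
      {c₀ : C} (g : c₀ ⟶ c') (hg : T.arrows (g ≫ u)),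
      S.ph.hom.app (op c₀) (S.E.val.map g.op y')
        = (S.L.obj S.Fs).val.map (𝟙 c₀).op ((fam (g ≫ u) hg).z) := by
    intro c' u y' h c₀ g hg
    have h1 := congrArg ((S.L.obj S.Fs).val.map g.op) h
    have h2 := FunctorToTypes.naturality S.ph.hom g.op y'
    have h3 : (S.L.obj S.Fs).val.map g.op ((S.L.obj S.Fs).val.map u.op z0)
        = (S.L.obj S.Fs).val.map (g ≫ u).op z0 := by
      rw [op_comp, FunctorToTypes.map_comp_apply]
    have h4 : (S.L.obj S.Fs).val.map (g ≫ u).op z0 = (fam (g ≫ u) hg).z :=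
      hLF.valid_glue hzf (g ≫ u) hg
    have h5 : (fam (g ≫ u) hg).z
        = (S.L.obj S.Fs).val.map (𝟙 c₀).op ((fam (g ≫ u) hg).z) := by simp
    exact h2.trans (h1.trans (h3.trans (h4.trans h5)))
  have γex : ∀ {c' : C} (u : c' ⟶ c) (y' : S.E.val.obj (op c'))
      (h : S.ph.hom.app (op c') y' = (S.L.obj S.Fs).val.map u.op z0),
      ∃! t : G.val.obj (op c'), ∀ {c₀ : C} (g : c₀ ⟶ c') (hg : T.arrows (g ≫ u)),
        G.val.map g.op t
          = (fam (g ≫ u) hg).γ (𝟙 c₀) (S.E.val.map g.op y') (hcond u y' h g hg) := by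
    intro c' u y' h
    have hpb : T.pullback u ∈ S.J c' := S.J.pullback_stable u hT
    let x : Presieve.FamilyOfElements G.val (T.pullback u).arrows :=
      fun c₀ g hg => (fam (g ≫ u) hg).γ (𝟙 c₀) (S.E.val.map g.op y') (hcond u y' h g hg)
    have hx : x.Compatible := by
      rw [Presieve.compatible_iff_sieveCompatible]
      intro c₁ c₀ f g hf
      set A := fam (f ≫ u) hf with hA
      have hg' : T.arrows ((g ≫ f) ≫ u) := by
        rw [Category.assoc]
        exact T.downward_closed hf g
      have hmapA : fam ((g ≫ f) ≫ u) hg' = (GPval S G).map g.op A := by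
        have h1 := hfam (𝟙 c₀) g (f₁ := (g ≫ f) ≫ u) (f₂ := f ≫ u) hg' hf (by simp)
        rw [op_id, FunctorToTypes.map_id_apply] at h1
        exact h1
      have hyy : S.E.val.map (g ≫ f).op y' = S.E.val.map g.op (S.E.val.map f.op y') := by
        rw [op_comp, FunctorToTypes.map_comp_apply]
      have p' := hcond u y' h f hf
      have p₂ : S.ph.hom.app (op c₀) (S.E.val.map (g ≫ f).op y')
          = (S.L.obj S.Fs).val.map (𝟙 c₀).op (((GPval S G).map g.op A).z) := by
        have := hcond u y' h (g ≫ f) hg'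
        rw [hmapA] at this
        exact this
      have p₄ : S.ph.hom.app (op c₀) (S.E.val.map g.op (S.E.val.map f.op y'))
          = (S.L.obj S.Fs).val.map (g ≫ 𝟙 c₁).op A.z := by
        have hnat := FunctorToTypes.naturality S.ph.hom g.op (S.E.val.map f.op y')
        rw [hnat, p', ← FunctorToTypes.map_comp_apply, ← op_comp]
      have p₃ : S.ph.hom.app (op c₀) (S.E.val.map (g ≫ f).op y')
          = (S.L.obj S.Fs).val.map (𝟙 c₀ ≫ g).op A.z := by
        rw [hyy, p₄]
        congr 1
        simp
      calc x (g ≫ f) ((T.pullback u).downward_closed hf g)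
          = ((GPval S G).map g.op A).γ (𝟙 c₀) (S.E.val.map (g ≫ f).op y') p₂ :=
            GP.gcongr (hmapA) (𝟙 c₀) _ (hcond u y' h (g ≫ f) hg') p₂
        _ = A.γ (𝟙 c₀ ≫ g) (S.E.val.map (g ≫ f).op y') p₃ := rfl
        _ = A.γ (g ≫ 𝟙 c₁) (S.E.val.map g.op (S.E.val.map f.op y')) p₄ :=
            GP.acongr A (by simp) hyy p₃ p₄
        _ = G.val.map g.op (x f hf) := A.nat g (𝟙 c₁) (S.E.val.map f.op y') p' p₄
    obtain ⟨t, ht1, ht2⟩ := hGsh _ hpb x hx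
    exact ⟨t, fun {c₀} g hg => ht1 g hg, fun t' ht' => ht2 t' (fun c₀ g hg => ht' g hg)⟩
  let γg : ∀ {c' : C} (u : c' ⟶ c) (y' : S.E.val.obj (op c'))
      (_ : S.ph.hom.app (op c') y' = (S.L.obj S.Fs).val.map u.op z0), G.val.obj (op c') :=
    fun {c'} u y' h => (γex u y' h).exists.choose
  have hγg : ∀ {c' : C} (u : c' ⟶ c) (y' : S.E.val.obj (op c'))
      (h : S.ph.hom.app (op c') y' = (S.L.obj S.Fs).val.map u.op z0)
      {c₀ : C} (g : c₀ ⟶ c') (hg : T.arrows (g ≫ u)),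
      G.val.map g.op (γg u y' h)
        = (fam (g ≫ u) hg).γ (𝟙 c₀) (S.E.val.map g.op y') (hcond u y' h g hg) :=
    fun {c'} u y' h {c₀} g hg => (γex u y' h).exists.choose_spec g hg
  have hnatγ : ∀ {c' c'' : C} (w : c'' ⟶ c') (u : c' ⟶ c) (y' : S.E.val.obj (op c'))
      (h : S.ph.hom.app (op c') y' = (S.L.obj S.Fs).val.map u.op z0)
      (h₂ : S.ph.hom.app (op c'') (S.E.val.map w.op y')
        = (S.L.obj S.Fs).val.map (w ≫ u).op z0),
      γg (w ≫ u) (S.E.val.map w.op y') h₂ = G.val.map w.op (γg u y' h) := by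
    intro c' c'' w u y' h h₂
    apply (hGsh _ (S.J.pullback_stable (w ≫ u) hT)).isSeparatedFor.ext
    intro c₀ g hg
    have hg' : T.arrows ((g ≫ w) ≫ u) := by
      have h0 : T.arrows (g ≫ w ≫ u) := hg
      rwa [← Category.assoc] at h0
    have e := famcongr (Category.assoc g w u).symm hg hg'
    have hyy : S.E.val.map g.op (S.E.val.map w.op y') = S.E.val.map (g ≫ w).op y' := by
      rw [op_comp, FunctorToTypes.map_comp_apply]
    have q1 : S.ph.hom.app (op c₀) (S.E.val.map g.op (S.E.val.map w.op y'))
        = (S.L.obj S.Fs).val.map (𝟙 c₀).op ((fam ((g ≫ w) ≫ u) hg').z) := by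
      rw [← e]
      exact hcond (w ≫ u) (S.E.val.map w.op y') h₂ g hg
    calc G.val.map g.op (γg (w ≫ u) (S.E.val.map w.op y') h₂)
        = (fam (g ≫ w ≫ u) hg).γ (𝟙 c₀) (S.E.val.map g.op (S.E.val.map w.op y'))
            (hcond (w ≫ u) (S.E.val.map w.op y') h₂ g hg) := hγg _ _ h₂ g hg
      _ = (fam ((g ≫ w) ≫ u) hg').γ (𝟙 c₀) (S.E.val.map (g ≫ w).op y')
            (hcond u y' h (g ≫ w) hg') :=
          (GP.gcongr e (𝟙 c₀) _ (hcond (w ≫ u) (S.E.val.map w.op y') h₂ g hg) q1).trans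
            (GP.acongr _ rfl hyy q1 (hcond u y' h (g ≫ w) hg'))
      _ = G.val.map g.op (G.val.map w.op (γg u y' h)) := by
          rw [← FunctorToTypes.map_comp_apply, ← op_comp]
          exact (hγg u y' h (g ≫ w) hg').symm
  refine ⟨⟨z0, γg, hnatγ⟩, ?_, ?_⟩
  · intro c₀ f hf
    apply GP.ext'
    · exact hLF.valid_glue hzf f hf
    · intro c' u y' hA hB
      have hA₂ : S.ph.hom.app (op c') y' = (S.L.obj S.Fs).val.map (u ≫ f).op z0 := by
        rw [op_comp, FunctorToTypes.map_comp_apply]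
        exact hA
      apply (hGsh _ (S.J.pullback_stable (u ≫ f) hT)).isSeparatedFor.ext
      intro c₂ g hg
      have hg1 : T.arrows ((g ≫ u) ≫ f) := by
        have h0 : T.arrows (g ≫ u ≫ f) := hg
        rwa [← Category.assoc] at h0
      have e := famcongr (Category.assoc g u f) hg1 hg
      have h1 := hfam (𝟙 c₂) (g ≫ u) (f₁ := (g ≫ u) ≫ f) (f₂ := f) hg1 hf (by simp)
      rw [op_id, FunctorToTypes.map_id_apply] at h1
      have q4 : S.ph.hom.app (op c₂) (S.E.val.map g.op y')
          = (S.L.obj S.Fs).val.map (g ≫ u).op ((fam f hf).z) := by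
        have hn := FunctorToTypes.naturality S.ph.hom g.op y'
        rw [hn, hB, ← FunctorToTypes.map_comp_apply, ← op_comp]
      have q1 : S.ph.hom.app (op c₂) (S.E.val.map g.op y')
          = (S.L.obj S.Fs).val.map (𝟙 c₂).op ((fam ((g ≫ u) ≫ f) hg1).z) := by
        rw [e]
        exact hcond (u ≫ f) y' hA₂ g hg
      have q2 : S.ph.hom.app (op c₂) (S.E.val.map g.op y')
          = (S.L.obj S.Fs).val.map (𝟙 c₂).op (((GPval S G).map (g ≫ u).op (fam f hf)).z) := by
        rw [← h1]
        exact q1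
      have q3 : S.ph.hom.app (op c₂) (S.E.val.map g.op y')
          = (S.L.obj S.Fs).val.map (𝟙 c₂ ≫ g ≫ u).op ((fam f hf).z) := by
        rw [Category.id_comp]
        exact q4
      calc G.val.map g.op (γg (u ≫ f) y' hA₂)
          = (fam (g ≫ u ≫ f) hg).γ (𝟙 c₂) (S.E.val.map g.op y')
              (hcond (u ≫ f) y' hA₂ g hg) := hγg _ _ hA₂ g hg
        _ = (fam ((g ≫ u) ≫ f) hg1).γ (𝟙 c₂) (S.E.val.map g.op y') q1 :=
            GP.gcongr e.symm (𝟙 c₂) _ (hcond (u ≫ f) y' hA₂ g hg) q1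
        _ = ((GPval S G).map (g ≫ u).op (fam f hf)).γ (𝟙 c₂) (S.E.val.map g.op y') q2 :=
            GP.gcongr h1 (𝟙 c₂) _ q1 q2
        _ = (fam f hf).γ (𝟙 c₂ ≫ g ≫ u) (S.E.val.map g.op y') q3 := rfl
        _ = (fam f hf).γ (g ≫ u) (S.E.val.map g.op y') q4 :=
            GP.acongr _ (Category.id_comp _) rfl q3 q4
        _ = G.val.map g.op ((fam f hf).γ u y' hB) := (fam f hf).nat g u y' hB q4
  · intro A' hA'
    apply GP.ext'
    · apply hLF.isSeparatedFor.ext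
      intro c₀ f hf
      have h1 : (S.L.obj S.Fs).val.map f.op A'.z = (fam f hf).z :=
        congrArg GP.z (hA' f hf)
      rw [h1]
      exact (hLF.valid_glue hzf f hf).symm
    · intro c' u y' hA hB
      refine (γex u y' hB).unique ?_ (fun g hg => (γex u y' hB).exists.choose_spec g hg)
      intro c₀ g hg
      have q4 : S.ph.hom.app (op c₀) (S.E.val.map g.op y')
          = (S.L.obj S.Fs).val.map (g ≫ u).op A'.z := by
        have hn := FunctorToTypes.naturality S.ph.hom g.op y'
        rw [hn, hA, ← FunctorToTypes.map_comp_apply, ← op_comp]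
      have q5 : S.ph.hom.app (op c₀) (S.E.val.map g.op y')
          = (S.L.obj S.Fs).val.map (𝟙 c₀ ≫ g ≫ u).op A'.z := by
        rw [Category.id_comp]
        exact q4
      have q6 : S.ph.hom.app (op c₀) (S.E.val.map g.op y')
          = (S.L.obj S.Fs).val.map (𝟙 c₀).op (((GPval S G).map (g ≫ u).op A').z) := by
        rw [op_id, FunctorToTypes.map_id_apply]
        show _ = (S.L.obj S.Fs).val.map (g ≫ u).op A'.z
        exact q4
      calc G.val.map g.op (A'.γ u y' hA)
          = A'.γ (g ≫ u) (S.E.val.map g.op y') q4 := (A'.nat g u y' hA q4).symm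
        _ = A'.γ (𝟙 c₀ ≫ g ≫ u) (S.E.val.map g.op y') q5 :=
            GP.acongr A' (Category.id_comp _).symm rfl q4 q5
        _ = ((GPval S G).map (g ≫ u).op A').γ (𝟙 c₀) (S.E.val.map g.op y') q6 := rfl
        _ = (fam (g ≫ u) hg).γ (𝟙 c₀) (S.E.val.map g.op y') (hcond u y' hB g hg) :=
            GP.gcongr (hA' (g ≫ u) hg) (𝟙 c₀) _ q6 (hcond u y' hB g hg)

/-- The auxiliary sheaf `G'`. -/
noncomputable def Gsheaf (S : SetupF D C) (G : Sheaf S.J (Type u)) : Sheaf S.J (Type u) :=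
  ⟨GPval S G, GPval_isSheaf S G⟩

section Beta

variable (S : SetupF D C) {G : Sheaf S.J (Type u)} (β : S.Fp ⟶ S.ρ.obj G)

/-- The tautological morphism `β' : F ⟶ ρ G'`. -/
noncomputable def SetupF.betaP : S.Fs ⟶ S.ρ.obj (Gsheaf S G) where
  hom :=
    { app := fun X => ↾fun x =>
        { z := (S.adj.unit.app S.Fs).hom.app X x
          γ := fun {c'} u y' h => S.glue β x u y' h
          nat := by
            intro c' c'' w₀ u₀ y' h h₂
            have hx : S.Fs.val.map (𝟙 (unop X)).op x = x := by simp
            have hy₁ : S.ph.hom.app (op c'') (S.E.val.map w₀.op y')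
                = (S.L.obj S.Fs).val.map (w₀ ≫ u₀).op
                  ((S.adj.unit.app S.Fs).hom.app (op (unop X))
                    (S.Fs.val.map (𝟙 (unop X)).op x)) := by
              rw [hx]
              exact h₂
            exact (S.glue_congr β hx.symm rfl rfl h₂ hy₁).trans
              (S.glue_comp β (𝟙 (unop X)) x w₀ (w₀ ≫ u₀) u₀ (by simp) y' h hy₁) }
      naturality := by
        intro X Y i
        apply ConcreteCategory.hom_ext; intro x
        apply GP.ext'
        · exact FunctorToTypes.naturality (S.adj.unit.app S.Fs).hom i x
        · intro c' u y' hA hB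
          have hy₂ : S.ph.hom.app (op c') y'
              = (S.L.obj S.Fs).val.map (u ≫ S.p.map i.unop).op
                ((S.adj.unit.app S.Fs).hom.app (op (unop X)) x) := by
            erw [op_comp, FunctorToTypes.map_comp_apply]
            exact hB
          have hy₁ : S.ph.hom.app (op c') (S.E.val.map (𝟙 c').op y')
              = (S.L.obj S.Fs).val.map u.op
                ((S.adj.unit.app S.Fs).hom.app (op (unop Y))
                  (S.Fs.val.map (i.unop).op x)) := by
            rw [op_id, FunctorToTypes.map_id_apply]
            exact hA
          have step := S.glue_comp β i.unop x (𝟙 c') u (u ≫ S.p.map i.unop) (by simp) y' hy₂ hy₁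
          have e1 : S.glue β (S.Fs.val.map i x) u y' hA
              = S.glue β (S.Fs.val.map (i.unop).op x) u (S.E.val.map (𝟙 c').op y') hy₁ :=
            S.glue_congr β rfl rfl (by rw [op_id, FunctorToTypes.map_id_apply]) hA hy₁
          have e2 : G.val.map (𝟙 c').op (S.glue β x (u ≫ S.p.map i.unop) y' hy₂)
              = S.glue β x (u ≫ S.p.map i.unop) y' hy₂ := by
            rw [op_id, FunctorToTypes.map_id_apply]
          exact (e1.trans step).trans e2 }

/-- The key well-definedness property. -/
theorem SetupF.WD {c : C} {d₁ d₂ : D} (v₁ : c ⟶ S.p.obj d₁)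
    (v₂ : c ⟶ S.p.obj d₂) (s₁ : S.FpVal.obj (op d₁)) (s₂ : S.FpVal.obj (op d₂))
    (hE : S.E.val.map v₁.op s₁.1.2 = S.E.val.map v₂.op s₂.1.2) :
    G.val.map v₁.op (β.hom.app (op d₁) s₁) = G.val.map v₂.op (β.hom.app (op d₂) s₂) := by
  have a1 := congrArg ((S.L.obj S.Fs).val.map v₁.op) s₁.2
  have a2 := congrArg ((S.L.obj S.Fs).val.map v₂.op) s₂.2
  have b1 := FunctorToTypes.naturality S.ph.hom v₁.op s₁.1.2
  have b2 := FunctorToTypes.naturality S.ph.hom v₂.op s₂.1.2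
  have hz : (S.L.obj S.Fs).val.map v₁.op
        ((S.adj.unit.app S.Fs).hom.app (op d₁) s₁.1.1)
      = (S.L.obj S.Fs).val.map v₂.op
        ((S.adj.unit.app S.Fs).hom.app (op d₂) s₂.1.1) :=
    a1.trans (b1.symm.trans ((congrArg (S.ph.hom.app (op c)) hE).trans (b2.trans a2.symm)))
  have q₀ : S.ph.hom.app (op c) (S.E.val.map v₁.op s₁.1.2)
      = (S.L.obj S.Fs).val.map v₁.op ((S.adj.unit.app S.Fs).hom.app (op d₁) s₁.1.1) :=
    b1.trans a1.symm
  have q₀' : S.ph.hom.app (op c) (S.E.val.map v₁.op s₁.1.2)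
      = (S.L.obj S.Fs).val.map v₂.op ((S.adj.unit.app S.Fs).hom.app (op d₂) s₂.1.1) :=
    (congrArg (S.ph.hom.app (op c)) hE).trans (b2.trans a2.symm)
  set ψ := (S.adj.homEquiv S.Fs (Gsheaf S G)).symm (S.betaP β) with hψ
  have key : (GPval S G).map v₁.op ((S.betaP β).hom.app (op d₁) s₁.1.1)
      = (GPval S G).map v₂.op ((S.betaP β).hom.app (op d₂) s₂.1.1) := by
    have t1 := S.transpose_unit_elem (S.betaP β) s₁.1.1
    have t2 := S.transpose_unit_elem (S.betaP β) s₂.1.1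
    have n1 := elem_nat ψ v₁ ((S.adj.unit.app S.Fs).hom.app (op d₁) s₁.1.1)
    have n2 := elem_nat ψ v₂ ((S.adj.unit.app S.Fs).hom.app (op d₂) s₂.1.1)
    have c1 := congrArg (ψ.hom.app (op c)) hz
    exact (congrArg ((GPval S G).map v₁.op) t1.symm).trans
      (n1.symm.trans (c1.trans (n2.trans (congrArg ((GPval S G).map v₂.op) t2))))
  have q₁ : S.ph.hom.app (op c) (S.E.val.map v₁.op s₁.1.2)
      = (S.L.obj S.Fs).val.map (𝟙 c).op
        (((GPval S G).map v₁.op ((S.betaP β).hom.app (op d₁) s₁.1.1)).z) := by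
    rw [op_id, FunctorToTypes.map_id_apply]
    exact q₀
  have q₂ : S.ph.hom.app (op c) (S.E.val.map v₁.op s₁.1.2)
      = (S.L.obj S.Fs).val.map (𝟙 c).op
        (((GPval S G).map v₂.op ((S.betaP β).hom.app (op d₂) s₂.1.1)).z) := by
    rw [op_id, FunctorToTypes.map_id_apply]
    exact q₀'
  have hγ := GP.gcongr key (𝟙 c) (S.E.val.map v₁.op s₁.1.2) q₁ q₂
  have p₁ : S.ph.hom.app (op c) (S.E.val.map v₁.op s₁.1.2)
      = (S.L.obj S.Fs).val.map (𝟙 c ≫ v₁).op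
        ((S.adj.unit.app S.Fs).hom.app (op d₁) s₁.1.1) := by
    rw [Category.id_comp]; exact q₀
  have p₂ : S.ph.hom.app (op c) (S.E.val.map v₁.op s₁.1.2)
      = (S.L.obj S.Fs).val.map (𝟙 c ≫ v₂).op
        ((S.adj.unit.app S.Fs).hom.app (op d₂) s₂.1.1) := by
    rw [Category.id_comp]; exact q₀'
  have p₂' : S.ph.hom.app (op c) (S.E.val.map v₂.op s₂.1.2)
      = (S.L.obj S.Fs).val.map v₂.op ((S.adj.unit.app S.Fs).hom.app (op d₂) s₂.1.1) :=
    b2.trans a2.symm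
  have e₁ : ((GPval S G).map v₁.op ((S.betaP β).hom.app (op d₁) s₁.1.1)).γ (𝟙 c)
        (S.E.val.map v₁.op s₁.1.2) q₁
      = S.glue β s₁.1.1 v₁ (S.E.val.map v₁.op s₁.1.2) q₀ := by
    show S.glue β s₁.1.1 (𝟙 c ≫ v₁) (S.E.val.map v₁.op s₁.1.2) p₁ = _
    exact S.glue_congr β rfl (Category.id_comp v₁) rfl p₁ q₀
  have e₂ : ((GPval S G).map v₂.op ((S.betaP β).hom.app (op d₂) s₂.1.1)).γ (𝟙 c)
        (S.E.val.map v₁.op s₁.1.2) q₂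
      = S.glue β s₂.1.1 v₂ (S.E.val.map v₂.op s₂.1.2) p₂' := by
    show S.glue β s₂.1.1 (𝟙 c ≫ v₂) (S.E.val.map v₁.op s₁.1.2) p₂ = _
    exact S.glue_congr β rfl (Category.id_comp v₂) hE p₂ p₂'
  have r₁ := S.glue_eval β s₁ v₁ q₀
  have r₂ := S.glue_eval β s₂ v₂ p₂'
  exact r₁.symm.trans (e₁.symm.trans (hγ.trans (e₂.trans r₂)))

end Beta

theorem SetupF.gsh_inj (S : SetupF D C) {c : C} (A B : (S.L.obj S.Fp).val.obj (op c))
    (h : S.gsh.hom.app (op c) A = S.gsh.hom.app (op c) B) : A = B := by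
  have hcov := S.J.intersection_covering (S.unitSieve_mem S.Fp A) (S.unitSieve_mem S.Fp B)
  apply ((isSheaf_iff_isSheaf_of_type S.J _).mp (S.L.obj S.Fp).cond _ hcov).isSeparatedFor.ext
  rintro c₀ m ⟨⟨d₁, t₁, s₁, hr₁⟩, ⟨d₂, t₂, s₂, hr₂⟩⟩
  rw [hr₁, hr₂]
  have u1 := S.gsh_unit s₁
  have u2 := S.gsh_unit s₂
  have n1 := elem_nat S.gsh t₁ ((S.adj.unit.app S.Fp).hom.app (op d₁) s₁)
  have n2 := elem_nat S.gsh t₂ ((S.adj.unit.app S.Fp).hom.app (op d₂) s₂)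
  have nm := elem_nat S.gsh m A
  have nm' := elem_nat S.gsh m B
  have hE : S.E.val.map t₁.op s₁.1.2 = S.E.val.map t₂.op s₂.1.2 := by
    calc S.E.val.map t₁.op s₁.1.2
        = S.E.val.map t₁.op (S.gsh.hom.app (op (S.p.obj d₁))
            ((S.adj.unit.app S.Fp).hom.app (op d₁) s₁)) := by rw [u1]
      _ = S.gsh.hom.app (op c₀) ((S.L.obj S.Fp).val.map t₁.op
            ((S.adj.unit.app S.Fp).hom.app (op d₁) s₁)) := n1.symm
      _ = S.gsh.hom.app (op c₀) ((S.L.obj S.Fp).val.map m.op A) := by rw [hr₁]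
      _ = S.E.val.map m.op (S.gsh.hom.app (op c) A) := nm
      _ = S.E.val.map m.op (S.gsh.hom.app (op c) B) := by rw [h]
      _ = S.gsh.hom.app (op c₀) ((S.L.obj S.Fp).val.map m.op B) := nm'.symm
      _ = S.gsh.hom.app (op c₀) ((S.L.obj S.Fp).val.map t₂.op
            ((S.adj.unit.app S.Fp).hom.app (op d₂) s₂)) := by rw [hr₂]
      _ = S.E.val.map t₂.op (S.gsh.hom.app (op (S.p.obj d₂))
            ((S.adj.unit.app S.Fp).hom.app (op d₂) s₂)) := n2
      _ = S.E.val.map t₂.op s₂.1.2 := by rw [u2]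
  exact S.WD (G := S.L.obj S.Fp) (S.adj.unit.app S.Fp) t₁ t₂ s₁ s₂ hE

theorem SetupF.gsh_surj (S : SetupF D C) {c : C} (y₀ : S.E.val.obj (op c)) :
    ∃ A : (S.L.obj S.Fp).val.obj (op c), S.gsh.hom.app (op c) A = y₀ := by
  classical
  have hLFp := (isSheaf_iff_isSheaf_of_type S.J _).mp (S.L.obj S.Fp).cond _
    (S.surjSieve_mem y₀)
  let x : Presieve.FamilyOfElements (S.L.obj S.Fp).val (S.surjSieve y₀).arrows :=
    fun c₀ m hm => hm.choose
  have hx : x.Compatible := by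
    intro Y₁ Y₂ Z g₁ g₂ f₁ f₂ h₁ h₂ comm
    apply S.gsh_inj
    have n1 := elem_nat S.gsh g₁ (h₁.choose)
    have n2 := elem_nat S.gsh g₂ (h₂.choose)
    rw [n1, n2, h₁.choose_spec, h₂.choose_spec, ← FunctorToTypes.map_comp_apply,
      ← FunctorToTypes.map_comp_apply, ← op_comp, ← op_comp, comm]
  refine ⟨hLFp.amalgamate x hx, ?_⟩
  apply ((isSheaf_iff_isSheaf_of_type S.J _).mp S.E.cond _
    (S.surjSieve_mem y₀)).isSeparatedFor.ext
  intro c₀ m hm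
  calc S.E.val.map m.op (S.gsh.hom.app (op c) (hLFp.amalgamate x hx))
      = S.gsh.hom.app (op c₀) ((S.L.obj S.Fp).val.map m.op (hLFp.amalgamate x hx)) :=
        (elem_nat S.gsh m _).symm
    _ = S.gsh.hom.app (op c₀) (x m hm) := by rw [hLFp.valid_glue hx m hm]
    _ = S.E.val.map m.op y₀ := hm.choose_spec

theorem SetupF.gsh_isIso (S : SetupF D C) : IsIso S.gsh := by
  have hb : ∀ X : Cᵒᵖ, IsIso (S.gsh.hom.app X) := by
    intro X
    rw [isIso_iff_bijective]
    exact ⟨fun A B hAB => S.gsh_inj A B hAB, fun y₀ => S.gsh_surj y₀⟩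
  have hv : IsIso S.gsh.hom := NatIso.isIso_of_isIso_app S.gsh.hom
  haveI : IsIso ((sheafToPresheaf S.J (Type u)).map S.gsh) := hv
  exact isIso_of_reflects_iso S.gsh (sheafToPresheaf S.J (Type u))

theorem SetupF.cartesian (S : SetupF D C) : IsCartesianFor S.L S.fh := by
  haveI := S.gsh_isIso
  intro G'' g h hcomm
  set k := S.adj.homEquiv G'' S.E (h ≫ S.gsh) with hk
  have hk' : k = S.adj.unit.app G'' ≫ S.ρ.map (h ≫ S.gsh) := Adjunction.homEquiv_unit _ _ _ _
  have hgu : g ≫ S.adj.unit.app S.Fs = k ≫ S.ρ.map S.ph := by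
    have e1 : k ≫ S.ρ.map S.ph
        = S.adj.unit.app G'' ≫ S.ρ.map ((h ≫ S.gsh) ≫ S.ph) := by
      rw [hk', Category.assoc, ← S.ρ.map_comp]
    have e2 : (h ≫ S.gsh) ≫ S.ph = S.L.map g := by
      rw [Category.assoc, ← S.Lfh_eq, hcomm]
    rw [e1, e2]
    exact S.adj.unit.naturality g
  have hcond : ∀ (X : Dᵒᵖ) (ξ : G''.val.obj X),
      (S.adj.unit.app S.Fs).hom.app X (g.hom.app X ξ)
        = S.ph.hom.app (S.p.op.obj X) (k.hom.app X ξ) := by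
    intro X ξ
    exact ConcreteCategory.congr_hom (NatTrans.congr_app (congrArg InducedCategory.Hom.hom hgu) X) ξ
  let h' : G'' ⟶ S.Fp :=
    ⟨{ app := fun X => ↾fun ξ => ⟨⟨g.hom.app X ξ, k.hom.app X ξ⟩, hcond X ξ⟩
       naturality := by
        intro X Y i
        apply ConcreteCategory.hom_ext; intro ξ
        apply Subtype.ext
        apply Prod.ext
        · exact FunctorToTypes.naturality g.hom i ξ
        · exact FunctorToTypes.naturality k.hom i ξ }⟩
  have hsnd : S.adj.unit.app S.Fp ≫ S.ρ.map S.gsh = S.sndH := by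
    have h0 := Equiv.apply_symm_apply (S.adj.homEquiv S.Fp S.E) S.sndH
    rw [Adjunction.homEquiv_unit] at h0
    exact h0
  have hsndk : h' ≫ S.sndH = k := by
    apply Sheaf.hom_ext
    apply NatTrans.ext
    funext X
    rfl
  have hLh' : S.L.map h' = h := by
    apply (S.adj.homEquiv G'' (S.L.obj S.Fp)).injective
    have e1 : S.adj.homEquiv G'' (S.L.obj S.Fp) (S.L.map h')
        = h' ≫ S.adj.unit.app S.Fp := by
      rw [Adjunction.homEquiv_unit]
      exact (S.adj.unit.naturality h').symm
    have e2 : S.adj.homEquiv G'' (S.L.obj S.Fp) h = S.adj.unit.app G'' ≫ S.ρ.map h :=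
      Adjunction.homEquiv_unit _ _ _ _
    rw [e1, e2, ← cancel_mono (S.ρ.map S.gsh), Category.assoc, Category.assoc, hsnd,
      hsndk, ← S.ρ.map_comp]
    exact hk'
  refine ⟨h', ⟨hLh', by apply Sheaf.hom_ext; rfl⟩, ?_⟩
  rintro y ⟨hy1, hy2⟩
  have hysnd : y ≫ S.sndH = k := by
    rw [← hsnd, ← Category.assoc]
    have e3 : y ≫ S.adj.unit.app S.Fp = S.adj.unit.app G'' ≫ S.ρ.map (S.L.map y) :=
      S.adj.unit.naturality y
    rw [e3, hy1, Category.assoc, ← S.ρ.map_comp]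
    exact hk'.symm
  apply Sheaf.hom_ext
  apply NatTrans.ext
  funext X
  apply ConcreteCategory.hom_ext; intro ξ
  apply Subtype.ext
  apply Prod.ext
  · exact ConcreteCategory.congr_hom (NatTrans.congr_app (congrArg InducedCategory.Hom.hom hy2) X) ξ
  · exact ConcreteCategory.congr_hom (NatTrans.congr_app (congrArg InducedCategory.Hom.hom hysnd) X) ξ

end StreetAux

/-- For a continuous local fibration `p : (𝒟,K) ⟶ (𝒞,J)`, any left adjoint `L` of the
restriction functor `ρ_p` is a fibration in the Street sense. -/
theorem isStreetFibration_of_continuous_localFibration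
    (p : D ⥤ C) (K : GrothendieckTopology D) (J : GrothendieckTopology C)
    (hp : IsLocalFibration.{u} p K J)
    (hcont : ∀ F : Sheaf J (Type u), Presheaf.IsSheaf K (p.op ⋙ F.val))
    (L : Sheaf K (Type u) ⥤ Sheaf J (Type u))
    (adj : L ⊣ restrictSheaf p K J hcont) :
    IsStreetFibration L := by
  intro Fs E φ
  let S : StreetAux.SetupF D C :=
    { p := p, K := K, J := J, hp := hp, hcont := hcont, L := L, adj := adj,
      Fs := Fs, E := E, ph := φ }
  haveI := S.gsh_isIso
  exact ⟨S.Fp, S.fh, asIso S.gsh, S.cartesian, by rw [S.Lfh_eq]; rfl⟩
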